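/- For every p ∈ (0,1), every real ε with p + ε ∈ (0,1), and every r ∈ (0,1]: (ln 2 / r)·( h(p + r·ε) − (1−r)·h(p) − r·h(p + ε) ) ≥ (1−r)·ε². -/

import Mathlib

open Real

/-- Binary entropy with base-2 logarithm, with the convention `0 * log 0 = 0`. -/
noncomputable def h2 (x : ℝ) : ℝ := -(x * Real.logb 2 x) - (1 - x) * Real.logb 2 (1 - x)

lemma h2_eq (x : ℝ) : h2 x = Real.binEntropy x / Real.log 2 := by
  simp [h2, Real.binEntropy, Real.logb, Real.log_inv]
  ring

lemma aux_deriv (x : ℝ) (hx : x ∈ Set.Ioo (0:ℝ) 1) :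
    HasDerivAt (fun y : ℝ => Real.log (1 - y) - Real.log y + 4 * y)
      (-1 / (1 - x) - x⁻¹ + 4) x := by
  obtain ⟨hx0, hx1⟩ := hx
  have h1 : HasDerivAt (fun y : ℝ => Real.log (1 - y)) (-1 / (1 - x)) x := by
    have : HasDerivAt (fun y : ℝ => 1 - y) (-1) x := by
      simpa using (hasDerivAt_id x).const_sub 1
    simpa using this.log (by linarith)
  have h2 : HasDerivAt Real.log x⁻¹ x := Real.hasDerivAt_log hx0.ne'
  have h3 : HasDerivAt (fun y : ℝ => 4 * y) 4 x := by
    simpa using (hasDerivAt_id x).const_mul 4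
  exact (h1.sub h2).add h3

lemma deriv_g_eq (x : ℝ) (hx : x ∈ Set.Ioo (0:ℝ) 1) :
    deriv (fun y : ℝ => Real.binEntropy y + 2 * y ^ 2) x
      = Real.log (1 - x) - Real.log x + 4 * x := by
  obtain ⟨hx0, hx1⟩ := hx
  have hb : DifferentiableAt ℝ Real.binEntropy x :=
    Real.differentiableAt_binEntropy hx0.ne' (by linarith)
  have hq : DifferentiableAt ℝ (fun y : ℝ => 2 * y ^ 2) x := by fun_prop
  rw [deriv_fun_add hb hq, Real.deriv_binEntropy]
  have : deriv (fun y : ℝ => 2 * y ^ 2) x = 4 * x := by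
    rw [deriv_const_mul _ (by fun_prop)]
    simp [mul_comm]
    ring
  rw [this]

lemma concave_g : ConcaveOn ℝ (Set.Ioo (0:ℝ) 1)
    (fun y : ℝ => Real.binEntropy y + 2 * y ^ 2) := by
  have hD : Convex ℝ (Set.Ioo (0:ℝ) 1) := convex_Ioo 0 1
  have hint : interior (Set.Ioo (0:ℝ) 1) = Set.Ioo 0 1 := interior_Ioo
  have hdiff : DifferentiableOn ℝ (fun y : ℝ => Real.binEntropy y + 2 * y ^ 2)
      (Set.Ioo (0:ℝ) 1) := by
    intro x hx
    exact ((Real.differentiableAt_binEntropy hx.1.ne' (by linarith [hx.2])).add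
      (by fun_prop)).differentiableWithinAt
  have hEq : ∀ x ∈ Set.Ioo (0:ℝ) 1,
      deriv (fun y : ℝ => Real.binEntropy y + 2 * y ^ 2) x
        = Real.log (1 - x) - Real.log x + 4 * x := deriv_g_eq
  have hev : ∀ x ∈ Set.Ioo (0:ℝ) 1,
      deriv (fun y : ℝ => Real.binEntropy y + 2 * y ^ 2)
        =ᶠ[nhds x] (fun y => Real.log (1 - y) - Real.log y + 4 * y) := by
    intro x hx
    filter_upwards [isOpen_Ioo.mem_nhds hx] with y hy using hEq y hy
  apply concaveOn_of_deriv2_nonpos hD (hdiff.continuousOn) (by rwa [hint])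
  · rw [hint]
    intro x hx
    exact ((hev x hx).differentiableAt_iff.mpr
      (aux_deriv x hx).differentiableAt).differentiableWithinAt
  · rw [hint]
    intro x hx
    have h2d : deriv^[2] (fun y : ℝ => Real.binEntropy y + 2 * y ^ 2) x
        = -1 / (1 - x) - x⁻¹ + 4 := by
      simp only [Function.iterate_succ, Function.iterate_zero, Function.comp_apply, id]
      rw [Filter.EventuallyEq.deriv_eq (hev x hx)]
      exact (aux_deriv x hx).deriv
    rw [h2d]
    obtain ⟨hx0, hx1⟩ := hx
    have h1 : 0 < 1 - x := by linarith
    have hq : x * (1 - x) ≤ 1 / 4 := by nlinarith [sq_nonneg (2 * x - 1)]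
    have hB : 0 < x * (1 - x) := mul_pos hx0 h1
    have hE : (-1 / (1 - x) - x⁻¹ + 4) * (x * (1 - x)) = 4 * (x * (1 - x)) - 1 := by
      field_simp
      ring
    have hle : (-1 / (1 - x) - x⁻¹ + 4) * (x * (1 - x)) ≤ 0 * (x * (1 - x)) := by
      rw [hE, zero_mul]; linarith
    exact (mul_le_mul_iff_of_pos_right hB).mp hle

/-- For `p ∈ (0,1)`, `p + ε ∈ (0,1)` and `r ∈ (0,1]`:
`(ln 2 / r)·(h(p + rε) − (1−r)h(p) − r·h(p + ε)) ≥ (1−r)·ε²`. -/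
theorem stmt_18 (p ε r : ℝ) (hp0 : 0 < p) (hp1 : p < 1)
    (hpe0 : 0 < p + ε) (hpe1 : p + ε < 1) (hr0 : 0 < r) (hr1 : r ≤ 1) :
    (Real.log 2 / r) * (h2 (p + r * ε) - (1 - r) * h2 p - r * h2 (p + ε))
      ≥ (1 - r) * ε ^ 2 := by
  have hlog2 : (0:ℝ) < Real.log 2 := Real.log_pos (by norm_num)
  have hconc := concave_g.2 (Set.mem_Ioo.mpr ⟨hp0, hp1⟩) (Set.mem_Ioo.mpr ⟨hpe0, hpe1⟩)
    (by linarith : (0:ℝ) ≤ 1 - r) hr0.le (by ring)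
  simp only [smul_eq_mul] at hconc
  have hpt : (1 - r) * p + r * (p + ε) = p + r * ε := by ring
  rw [hpt] at hconc
  -- hconc : (1-r)*(B p + 2p²) + r*(B (p+ε) + 2(p+ε)²) ≤ B (p+rε) + 2(p+rε)²
  have key : Real.binEntropy (p + r * ε) - (1 - r) * Real.binEntropy p
      - r * Real.binEntropy (p + ε) ≥ 2 * r * (1 - r) * ε ^ 2 := by nlinarith
  rw [h2_eq, h2_eq, h2_eq]
  rw [ge_iff_le, div_mul_eq_mul_div, le_div_iff₀ hr0]
  have hexp : Real.log 2 * (Real.binEntropy (p + r * ε) / Real.log 2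
      - (1 - r) * (Real.binEntropy p / Real.log 2)
      - r * (Real.binEntropy (p + ε) / Real.log 2))
      = Real.binEntropy (p + r * ε) - (1 - r) * Real.binEntropy p
        - r * Real.binEntropy (p + ε) := by
    field_simp
  rw [hexp]
  nlinarith [sq_nonneg ε, sq_nonneg (r*ε)]
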